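/- arXiv:2105.13623 — 3 statements merged into one kernel-verified Lean document; each statement's English description precedes it below -/
import Mathlib

section
/- The bias of the DR estimator satisfies |E[L_DR] − L_ideal| = (1/|D|) |Σ_{(u,i)∈D} Δ_{u,i} δ_{u,i}|, where δ_{u,i} = e_{u,i} − ê_{u,i} and Δ_{u,i} = 1 − p_{u,i}/p̂_{u,i}. -/
open MeasureTheory ProbabilityTheory

/-- The bias of the DR estimator equals `(1/|D|)|∑ Δ_{u,i} δ_{u,i}|` where
`δ_{u,i} = e_{u,i} - ê_{u,i}` and `Δ_{u,i} = 1 - p_{u,i}/p̂_{u,i}`. -/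
theorem dr_bias {D : Type*} [Fintype D] [Nonempty D]
    {Ω : Type*} [MeasureSpace Ω] [IsProbabilityMeasure (ℙ : Measure Ω)]
    (e ehat p phat : D → ℝ) (o : D → Ω → ℝ)
    (hmeas : ∀ i, Measurable (o i))
    (h01 : ∀ i, ∀ᵐ ω, o i ω = 0 ∨ o i ω = 1)
    (hmean : ∀ i, (∫ ω, o i ω) = p i)
    (hindep : iIndepFun o ℙ)
    (hp0 : ∀ i, 0 ≤ p i) (hp1 : ∀ i, p i ≤ 1)
    (hphat : ∀ i, 0 < phat i) :
    |(∫ ω, (1 / (Fintype.card D : ℝ)) *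
          ∑ i, (ehat i + o i ω * (e i - ehat i) / phat i))
        - (1 / (Fintype.card D : ℝ)) * ∑ i, e i|
      = (1 / (Fintype.card D : ℝ)) *
          |∑ i, (1 - p i / phat i) * (e i - ehat i)| := by
  have hint : ∀ i, Integrable (o i) := fun i =>
    (integrable_const (1 : ℝ)).mono' (hmeas i).aestronglyMeasurable
      ((h01 i).mono fun ω h => by rcases h with h | h <;> simp [h])
  have hterm : ∀ i, Integrable (fun ω => ehat i + o i ω * (e i - ehat i) / phat i) := by
    intro i
    have : Integrable (fun ω => o i ω * ((e i - ehat i) / phat i)) :=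
      (hint i).mul_const _
    simpa [mul_div_assoc] using (integrable_const (ehat i)).add this
  have hI : (∫ ω, ∑ i, (ehat i + o i ω * (e i - ehat i) / phat i))
      = ∑ i, (ehat i + p i * (e i - ehat i) / phat i) := by
    rw [integral_finset_sum _ fun i _ => hterm i]
    refine Finset.sum_congr rfl fun i _ => ?_
    have : (∫ ω, (ehat i + o i ω * ((e i - ehat i) / phat i)))
        = ehat i + (∫ ω, o i ω) * ((e i - ehat i) / phat i) := by
      rw [integral_add (integrable_const _) ((hint i).mul_const _),
        integral_const, integral_mul_const]
      simp
    simpa [mul_div_assoc, hmean i] using this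
  rw [integral_const_mul, hI]
  rw [← mul_sub, abs_mul]
  have hN : |1 / (Fintype.card D : ℝ)| = 1 / (Fintype.card D : ℝ) := by
    rw [abs_of_nonneg]; positivity
  rw [hN]
  congr 1
  rw [← abs_neg]
  congr 1
  rw [neg_sub, ← Finset.sum_sub_distrib]
  refine Finset.sum_congr rfl fun i _ => ?_
  have := (hphat i).ne'
  field_simp
  ring
end

section
/- Double robustness of the DR estimator: if for every (u,i) ∈ D either ê_{u,i} = e_{u,i} or p̂_{u,i} = p_{u,i}, then the DR estimator is unbiased, i.e. E[L_DR] = L_ideal. -/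
open MeasureTheory ProbabilityTheory

/-- Double robustness: if for every pair either the imputed error or the
estimated propensity is accurate, the DR estimator is unbiased. -/
theorem dr_double_robust {D : Type*} [Fintype D] [Nonempty D]
    {Ω : Type*} [MeasureSpace Ω] [IsProbabilityMeasure (ℙ : Measure Ω)]
    (e ehat p phat : D → ℝ) (o : D → Ω → ℝ)
    (hmeas : ∀ i, Measurable (o i))
    (h01 : ∀ i, ∀ᵐ ω, o i ω = 0 ∨ o i ω = 1)
    (hmean : ∀ i, (∫ ω, o i ω) = p i)
    (hindep : iIndepFun o ℙ)
    (hp0 : ∀ i, 0 ≤ p i) (hp1 : ∀ i, p i ≤ 1)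
    (hphat : ∀ i, 0 < phat i)
    (hrobust : ∀ i, ehat i = e i ∨ phat i = p i) :
    (∫ ω, (1 / (Fintype.card D : ℝ)) *
        ∑ i, (ehat i + o i ω * (e i - ehat i) / phat i))
      = (1 / (Fintype.card D : ℝ)) * ∑ i, e i := by
  have hint : ∀ i, Integrable (o i) := fun i =>
    ⟨(hmeas i).aestronglyMeasurable,
      HasFiniteIntegral.of_bounded (C := 1)
        ((h01 i).mono (by rintro ω (h | h) <;> simp [h]))⟩
  have hint2 : ∀ i, Integrable (fun ω => ehat i + o i ω * (e i - ehat i) / phat i) := by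
    intro i
    have : Integrable (fun ω => o i ω * (e i - ehat i) / phat i) := by
      simpa [mul_div_assoc] using (hint i).mul_const ((e i - ehat i) / phat i)
    simpa using (integrable_const (ehat i)).add this
  rw [integral_const_mul]
  congr 1
  rw [integral_finset_sum _ (fun i _ => hint2 i)]
  refine Finset.sum_congr rfl fun i _ => ?_
  have : (∫ ω, ehat i + o i ω * (e i - ehat i) / phat i)
      = ehat i + p i * (e i - ehat i) / phat i := by
    rw [integral_add (integrable_const _)
        (by simpa [mul_div_assoc] using (hint i).mul_const ((e i - ehat i) / phat i))]
    simp [mul_div_assoc, integral_mul_const, hmean i]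
  rw [this]
  rcases hrobust i with h | h
  · simp [h]
  · rw [h]
    field_simp [(h ▸ hphat i).ne']
    ring
end

section
/- Variance reduction of DR over IPS: if for every (u,i) ∈ D the imputed error satisfies 0 ≤ ê_{u,i} ≤ 2 e_{u,i}, then Var[L_DR] ≤ Var[L_IPS]. -/
open MeasureTheory ProbabilityTheory

lemma variance_const_add' {Ω : Type*} [MeasureSpace Ω]
    [IsProbabilityMeasure (ℙ : Measure Ω)] (c : ℝ) {X : Ω → ℝ}
    (hX : MemLp X 2 ℙ) :
    variance (fun ω => c + X ω) ℙ = variance X ℙ := by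
  have hX' : MemLp (fun ω => c + X ω) 2 ℙ := (memLp_const c).add hX
  rw [variance_eq_integral hX'.aemeasurable, variance_eq_integral hX.aemeasurable]
  have hint : Integrable X ℙ := hX.integrable one_le_two
  have : (∫ ω, (c + X ω)) = c + ∫ ω, X ω := by
    rw [integral_add (integrable_const c) hint]; simp
  simp only [this]
  congr 1
  funext ω
  ring

/-- Variance reduction of the DR estimator over the IPS estimator when
`0 ≤ ê_{u,i} ≤ 2 e_{u,i}` for every pair. -/
theorem dr_variance_le_ips_variance {D : Type*} [Fintype D] [Nonempty D]
    {Ω : Type*} [MeasureSpace Ω] [IsProbabilityMeasure (ℙ : Measure Ω)]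
    (e ehat p phat : D → ℝ) (o : D → Ω → ℝ)
    (hmeas : ∀ i, Measurable (o i))
    (h01 : ∀ i, ∀ᵐ ω, o i ω = 0 ∨ o i ω = 1)
    (hmean : ∀ i, (∫ ω, o i ω) = p i)
    (hindep : iIndepFun o ℙ)
    (hp0 : ∀ i, 0 ≤ p i) (hp1 : ∀ i, p i ≤ 1)
    (hphat : ∀ i, 0 < phat i)
    (he0 : ∀ i, 0 ≤ e i)
    (hehat : ∀ i, 0 ≤ ehat i ∧ ehat i ≤ 2 * e i) :
    variance (fun ω => (1 / (Fintype.card D : ℝ)) *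
        ∑ i, (ehat i + o i ω * (e i - ehat i) / phat i)) ℙ
      ≤ variance (fun ω => (1 / (Fintype.card D : ℝ)) *
          ∑ i, o i ω * e i / phat i) ℙ := by
  classical
  set a : D → ℝ := fun i => (e i - ehat i) / phat i with ha
  set b : D → ℝ := fun i => e i / phat i with hb
  -- o i is MemLp 2
  have ho2 : ∀ i, MemLp (o i) 2 ℙ := by
    intro i
    refine MemLp.of_bound ((hmeas i).aestronglyMeasurable) 1 ?_
    filter_upwards [h01 i] with ω hω
    rcases hω with h | h <;> simp [h]
  -- the summand random variables
  have hoc : ∀ i c, MemLp (fun ω => o i ω * c) 2 ℙ := fun i c => by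
    simpa [mul_comm] using (ho2 i).const_mul c
  set X : D → Ω → ℝ := fun i ω => ehat i + o i ω * a i with hX
  set Y : D → Ω → ℝ := fun i ω => o i ω * b i with hY
  have hX2 : ∀ i, MemLp (X i) 2 ℙ := fun i =>
    (memLp_const (ehat i)).add (hoc i (a i))
  have hY2 : ∀ i, MemLp (Y i) 2 ℙ := fun i => hoc i (b i)
  have hXindep : Set.Pairwise (↑(Finset.univ : Finset D))
      fun i j => IndepFun (X i) (X j) ℙ := by
    intro i _ j _ hij
    exact (hindep.indepFun hij).comp
      ((measurable_id.mul_const (a i)).const_add (ehat i))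
      ((measurable_id.mul_const (a j)).const_add (ehat j))
  have hYindep : Set.Pairwise (↑(Finset.univ : Finset D))
      fun i j => IndepFun (Y i) (Y j) ℙ := by
    intro i _ j _ hij
    exact (hindep.indepFun hij).comp
      (measurable_id.mul_const (b i)) (measurable_id.mul_const (b j))
  have hsumX : variance (fun ω => ∑ i, X i ω) ℙ = ∑ i, variance (X i) ℙ := by
    have := IndepFun.variance_sum (μ := ℙ) (s := Finset.univ)
      (fun i _ => hX2 i) hXindep
    rw [← this]
    congr 1
    funext ω
    simp [Finset.sum_apply]
  have hsumY : variance (fun ω => ∑ i, Y i ω) ℙ = ∑ i, variance (Y i) ℙ := by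
    have := IndepFun.variance_sum (μ := ℙ) (s := Finset.univ)
      (fun i _ => hY2 i) hYindep
    rw [← this]
    congr 1
    funext ω
    simp [Finset.sum_apply]
  have hvarX : ∀ i, variance (X i) ℙ = (a i) ^ 2 * variance (o i) ℙ := by
    intro i
    have h1 : variance (X i) ℙ = variance (fun ω => o i ω * a i) ℙ :=
      variance_const_add' (ehat i) (hoc i (a i))
    rw [h1]
    have : (fun ω => o i ω * a i) = fun ω => a i * o i ω := by
      funext ω; ring
    rw [this, variance_const_mul]
  have hvarY : ∀ i, variance (Y i) ℙ = (b i) ^ 2 * variance (o i) ℙ := by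
    intro i
    have : (fun ω => o i ω * b i) = fun ω => b i * o i ω := by
      funext ω; ring
    simp only [hY, this, variance_const_mul]
  -- coefficient comparison
  have hab : ∀ i, (a i) ^ 2 ≤ (b i) ^ 2 := by
    intro i
    have h1 := (hehat i).1
    have h2 := (hehat i).2
    have : |e i - ehat i| ≤ |e i| := by
      rw [abs_le, abs_of_nonneg (he0 i)]
      constructor <;> linarith
    have hsq : (e i - ehat i) ^ 2 ≤ (e i) ^ 2 := by
      rw [← sq_abs (e i - ehat i), ← sq_abs (e i)]
      exact pow_le_pow_left₀ (abs_nonneg _) this 2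
    have hp2 : (0:ℝ) ≤ (1 / phat i) ^ 2 := sq_nonneg _
    have : (e i - ehat i) ^ 2 * (1 / phat i) ^ 2 ≤ (e i) ^ 2 * (1 / phat i) ^ 2 :=
      mul_le_mul_of_nonneg_right hsq hp2
    calc (a i) ^ 2 = (e i - ehat i) ^ 2 * (1 / phat i) ^ 2 := by
          rw [ha]; field_simp
      _ ≤ (e i) ^ 2 * (1 / phat i) ^ 2 := this
      _ = (b i) ^ 2 := by rw [hb]; field_simp
  -- assemble
  have hLHS : (fun ω => (1 / (Fintype.card D : ℝ)) *
      ∑ i, (ehat i + o i ω * (e i - ehat i) / phat i)) =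
      fun ω => (1 / (Fintype.card D : ℝ)) * ∑ i, X i ω := by
    funext ω
    congr 1
    apply Finset.sum_congr rfl
    intro i _
    simp only [hX, ha]
    ring
  have hRHS : (fun ω => (1 / (Fintype.card D : ℝ)) *
      ∑ i, o i ω * e i / phat i) =
      fun ω => (1 / (Fintype.card D : ℝ)) * ∑ i, Y i ω := by
    funext ω
    congr 1
    apply Finset.sum_congr rfl
    intro i _
    simp only [hY, hb]
    ring
  rw [hLHS, hRHS, variance_const_mul, variance_const_mul, hsumX, hsumY]
  apply mul_le_mul_of_nonneg_left _ (sq_nonneg _)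
  apply Finset.sum_le_sum
  intro i _
  rw [hvarX i, hvarY i]
  exact mul_le_mul_of_nonneg_right (hab i) (variance_nonneg _ _)
end
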